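/- arXiv:1811.09867 — 4 statements merged into one kernel-verified Lean document; each statement's English description precedes it below -/
import Mathlib

section
/- With ρ as above (ψ continuous nonnegative, n ≥ 2), for all d₂ > d₁ ≥ d₀ one has ∫_{d₁}^{d₂} ρ(t) dt ≤ (2^{n−1}/(n−1)) (ρ(d₁) + ∫_{d₁}^{d₂} ψ(s) ds). In particular, if ∫_{d₀}^∞ ψ < ∞ then ρ is integrable on [d₀, ∞). -/
open MeasureTheory Set

lemma ftc_cont {f : ℝ → ℝ} (hf : Continuous f) (a t : ℝ) :
    HasDerivAt (fun u => ∫ s in a..u, f s) (f t) t :=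
  intervalIntegral.integral_hasDerivAt_right (hf.intervalIntegrable _ _)
    (hf.stronglyMeasurableAtFilter _ _) hf.continuousAt

lemma cosh_pow_inv_le (m : ℕ) (t : ℝ) :
    (Real.cosh t ^ m)⁻¹ ≤ 2 ^ m * Real.exp (-(m * t)) := by
  have h1 : Real.exp t / 2 ≤ Real.cosh t := by
    rw [Real.cosh_eq]; have := (Real.exp_pos (-t)).le; linarith
  have hep : (0:ℝ) < Real.exp t / 2 := by positivity
  have h2 : (Real.exp t / 2) ^ m ≤ Real.cosh t ^ m :=
    pow_le_pow_left₀ hep.le h1 m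
  have h3 : (Real.cosh t ^ m)⁻¹ ≤ ((Real.exp t / 2) ^ m)⁻¹ :=
    inv_anti₀ (by positivity) h2
  refine h3.trans_eq ?_
  rw [div_pow, ← Real.exp_nat_mul, Real.exp_neg, Real.exp_nat_mul]
  field_simp

lemma int_exp_neg (m : ℕ) (hm : 1 ≤ m) (a b : ℝ) :
    ∫ t in a..b, Real.exp (-(m * t)) =
      (Real.exp (-(m * a)) - Real.exp (-(m * b))) / m := by
  have hm0 : (0:ℝ) < m := by exact_mod_cast hm
  have hderiv : ∀ t ∈ uIcc a b,
      HasDerivAt (fun t => -Real.exp (-(m * t)) / m) (Real.exp (-(m * t))) t := by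
    intro t _
    have h1 : HasDerivAt (fun t : ℝ => -(m * t)) (-(m:ℝ)) t := by
      simpa using ((hasDerivAt_id t).const_mul (-(m:ℝ)))
    have h2 := (Real.hasDerivAt_exp (-(m * t))).comp t h1
    have h3 := (h2.neg).div_const (m:ℝ)
    refine h3.congr_deriv ?_
    rw [mul_neg, neg_neg, mul_div_assoc, div_self hm0.ne', mul_one]
  rw [intervalIntegral.integral_eq_sub_of_hasDerivAt hderiv
    ((Real.continuous_exp.comp (by continuity)).intervalIntegrable a b)]
  ring

lemma key_bound (m : ℕ) (hm : 1 ≤ m) {a b : ℝ} (ha : 0 ≤ a) (hab : a ≤ b) :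
    ∫ t in a..b, (Real.cosh t ^ m)⁻¹ ≤ 2 ^ m / m * (Real.cosh a ^ m)⁻¹ := by
  have hm0 : (0:ℝ) < m := by exact_mod_cast hm
  have hc1 : Continuous fun t : ℝ => (Real.cosh t ^ m)⁻¹ := by
    apply Continuous.inv₀ (by continuity)
    intro t; positivity
  have hc2 : Continuous fun t : ℝ => (2:ℝ) ^ m * Real.exp (-(m * t)) := by continuity
  have step1 : ∫ t in a..b, (Real.cosh t ^ m)⁻¹ ≤
      ∫ t in a..b, 2 ^ m * Real.exp (-(m * t)) := by
    apply intervalIntegral.integral_mono_on hab (hc1.intervalIntegrable a b)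
      (hc2.intervalIntegrable a b)
    intro t _; exact cosh_pow_inv_le m t
  have step2 : ∫ t in a..b, (2:ℝ) ^ m * Real.exp (-(m * t)) =
      2 ^ m * ((Real.exp (-(m * a)) - Real.exp (-(m * b))) / m) := by
    rw [intervalIntegral.integral_const_mul, int_exp_neg m hm]
  have step3 : Real.exp (-(m * a)) ≤ (Real.cosh a ^ m)⁻¹ := by
    have hca : Real.cosh a ≤ Real.exp a := by
      rw [Real.cosh_eq]
      have := Real.exp_le_exp.mpr (neg_le_self ha)
      linarith
    have : Real.cosh a ^ m ≤ Real.exp (m * a) := by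
      rw [Real.exp_nat_mul] at *
      exact pow_le_pow_left₀ (Real.cosh_pos a).le hca m
    calc Real.exp (-(m * a)) = (Real.exp (m * a))⁻¹ := by rw [Real.exp_neg]
      _ ≤ (Real.cosh a ^ m)⁻¹ := inv_anti₀ (by positivity) this
  calc ∫ t in a..b, (Real.cosh t ^ m)⁻¹ ≤ _ := step1
    _ = 2 ^ m * ((Real.exp (-(m * a)) - Real.exp (-(m * b))) / m) := step2
    _ ≤ 2 ^ m * (Real.exp (-(m * a)) / m) := by
        gcongr
        have := (Real.exp_pos (-(m * b))).le; linarith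
    _ ≤ 2 ^ m / m * (Real.cosh a ^ m)⁻¹ := by
        rw [div_mul_eq_mul_div, mul_div_assoc]
        gcongr

lemma cont_g (m : ℕ) : Continuous fun t : ℝ => (Real.cosh t ^ m)⁻¹ := by
  apply Continuous.inv₀ (by continuity)
  intro t; positivity

/-- With `ρ(d) = cosh(d)^{-(n-1)} ∫_{d₀}^d ψ(s) cosh^{n-1}(s) ds`, for
`d₂ > d₁ ≥ d₀` one has
`∫_{d₁}^{d₂} ρ ≤ (2^{n-1}/(n-1)) (ρ(d₁) + ∫_{d₁}^{d₂} ψ)`;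
in particular, if `ψ` is integrable on `[d₀,∞)` then so is `ρ`. -/
theorem stmt_4 (n : ℕ) (hn : 2 ≤ n) (d₀ : ℝ) (hd₀ : 0 ≤ d₀)
    (ψ : ℝ → ℝ) (hψc : ContinuousOn ψ (Set.Ici d₀))
    (hψ0 : ∀ d ∈ Set.Ici d₀, 0 ≤ ψ d)
    (ρ : ℝ → ℝ)
    (hρ : ∀ d, ρ d = (∫ s in d₀..d, ψ s * Real.cosh s ^ (n - 1)) /
        Real.cosh d ^ (n - 1)) :
    (∀ d₁ d₂ : ℝ, d₀ ≤ d₁ → d₁ < d₂ →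
      (∫ t in d₁..d₂, ρ t) ≤
        2 ^ (n - 1) / (n - 1) * (ρ d₁ + ∫ s in d₁..d₂, ψ s)) ∧
      (IntegrableOn ψ (Set.Ici d₀) → IntegrableOn ρ (Set.Ici d₀)) := by
  set m := n - 1 with hmdef
  have hm1 : 1 ≤ m := by omega
  have hmR : ((m : ℕ) : ℝ) = (n : ℝ) - 1 := by
    rw [hmdef, Nat.cast_sub (by omega : 1 ≤ n)]; norm_num
  set φ : ℝ → ℝ := fun x => ψ (max x d₀) with hφdef
  have hφc : Continuous φ := hψc.comp_continuous (continuous_id.max continuous_const)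
    (fun x => Set.mem_Ici.mpr (le_max_right _ _))
  have hφ0 : ∀ x, 0 ≤ φ x := fun x => hψ0 _ (Set.mem_Ici.mpr (le_max_right _ _))
  have hφψ : ∀ x, d₀ ≤ x → φ x = ψ x := fun x hx => by
    simp only [hφdef]; rw [max_eq_left hx]
  have hu'c : Continuous fun s => φ s * Real.cosh s ^ m := hφc.mul (by continuity)
  set F : ℝ → ℝ := fun t => ∫ s in d₀..t, φ s * Real.cosh s ^ m with hFdef
  have hFderiv : ∀ t, HasDerivAt F (φ t * Real.cosh t ^ m) t := fun t => ftc_cont hu'c d₀ t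
  have hFc : Continuous F := continuous_iff_continuousAt.mpr fun t => (hFderiv t).continuousAt
  have hρF : ∀ d, d₀ ≤ d → ρ d = F d / Real.cosh d ^ m := by
    intro d hd
    rw [hρ d]
    congr 1
    apply intervalIntegral.integral_congr
    intro x hx
    rw [uIcc_of_le hd] at hx
    show ψ x * Real.cosh x ^ m = φ x * Real.cosh x ^ m
    rw [hφψ x hx.1]
  have hF0 : ∀ d, d₀ ≤ d → 0 ≤ F d := fun d hd =>
    intervalIntegral.integral_nonneg hd (fun x _ => mul_nonneg (hφ0 x) (by positivity))
  set g : ℝ → ℝ := fun t => (Real.cosh t ^ m)⁻¹ with hgdef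
  have hgc : Continuous g := cont_g m
  have key1 : ∀ d₁ d₂ : ℝ, d₀ ≤ d₁ → d₁ ≤ d₂ →
      (∫ t in d₁..d₂, ρ t) ≤
        2 ^ m / (m : ℝ) * (ρ d₁ + ∫ s in d₁..d₂, ψ s) := by
    intro d₁ d₂ h1 h12
    have h01 : 0 ≤ d₁ := hd₀.trans h1
    set G : ℝ → ℝ := fun t => ∫ s in d₂..t, g s with hGdef
    have hGderiv : ∀ t, HasDerivAt G (g t) t := fun t => ftc_cont hgc d₂ t
    have hGc : Continuous G := continuous_iff_continuousAt.mpr fun t => (hGderiv t).continuousAt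
    have parts := intervalIntegral.integral_mul_deriv_eq_deriv_mul
      (u := F) (u' := fun s => φ s * Real.cosh s ^ m) (v := G) (v' := g)
      (fun x _ => hFderiv x) (fun x _ => hGderiv x)
      (hu'c.intervalIntegrable d₁ d₂) (hgc.intervalIntegrable d₁ d₂)
    have hGd₂ : G d₂ = 0 := intervalIntegral.integral_same
    have hGd₁ : G d₁ = -∫ s in d₁..d₂, g s := intervalIntegral.integral_symm d₁ d₂
    have hρeq : (∫ t in d₁..d₂, ρ t) = ∫ t in d₁..d₂, F t * g t := by
      apply intervalIntegral.integral_congr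
      intro x hx
      rw [uIcc_of_le h12] at hx
      rw [hρF x (h1.trans hx.1)]
      simp only [hgdef]
      rw [div_eq_mul_inv]
    have bound1 : F d₁ * (∫ s in d₁..d₂, g s) ≤ 2 ^ m / (m : ℝ) * ρ d₁ := by
      have hk := key_bound m hm1 h01 h12
      calc F d₁ * (∫ s in d₁..d₂, g s)
          ≤ F d₁ * (2 ^ m / (m : ℝ) * (Real.cosh d₁ ^ m)⁻¹) :=
            mul_le_mul_of_nonneg_left hk (hF0 d₁ h1)
        _ = 2 ^ m / (m : ℝ) * ρ d₁ := by rw [hρF d₁ h1, div_eq_mul_inv]; ring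
    have bound2 : -(∫ s in d₁..d₂, (φ s * Real.cosh s ^ m) * G s) ≤
        2 ^ m / (m : ℝ) * ∫ s in d₁..d₂, ψ s := by
      rw [← intervalIntegral.integral_neg]
      have hsub : uIcc d₁ d₂ ⊆ Ici d₀ := by
        rw [uIcc_of_le h12]; exact (Icc_subset_Ici_self).trans (Ici_subset_Ici.mpr h1)
      have hrint : IntervalIntegrable (fun s => 2 ^ m / (m : ℝ) * ψ s) volume d₁ d₂ :=
        (continuousOn_const.mul (hψc.mono hsub)).intervalIntegrable
      have hmono : ∀ s ∈ Icc d₁ d₂,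
          -((φ s * Real.cosh s ^ m) * G s) ≤ 2 ^ m / (m : ℝ) * ψ s := by
        intro s hs
        have hGs : -G s = ∫ u in s..d₂, g u := by
          rw [intervalIntegral.integral_symm d₂ s]
        have hk := key_bound m hm1 (h01.trans hs.1) hs.2
        have hcosh : (0:ℝ) < Real.cosh s ^ m := by positivity
        calc -((φ s * Real.cosh s ^ m) * G s)
            = (φ s * Real.cosh s ^ m) * (∫ u in s..d₂, g u) := by rw [← hGs]; ring
          _ ≤ (φ s * Real.cosh s ^ m) * (2 ^ m / (m : ℝ) * (Real.cosh s ^ m)⁻¹) :=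
              mul_le_mul_of_nonneg_left hk (mul_nonneg (hφ0 s) hcosh.le)
          _ = 2 ^ m / (m : ℝ) * φ s := by field_simp
          _ = 2 ^ m / (m : ℝ) * ψ s := by rw [hφψ s (h1.trans hs.1)]
      calc (∫ s in d₁..d₂, -((φ s * Real.cosh s ^ m) * G s))
          ≤ ∫ s in d₁..d₂, 2 ^ m / (m : ℝ) * ψ s :=
            intervalIntegral.integral_mono_on h12
              ((hu'c.mul hGc).neg.intervalIntegrable _ _) hrint hmono
        _ = 2 ^ m / (m : ℝ) * ∫ s in d₁..d₂, ψ s := intervalIntegral.integral_const_mul _ _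
    rw [hρeq, parts, hGd₂, hGd₁, mul_zero, mul_neg, zero_sub, neg_neg, mul_add]
    linarith
  constructor
  · intro d₁ d₂ h1 h12
    rw [← hmR]
    exact key1 d₁ d₂ h1 h12.le
  · intro hψi
    have hC : (0:ℝ) ≤ 2 ^ m / (m : ℝ) := by positivity
    have hρc : ContinuousOn ρ (Ici d₀) := by
      have hcont : Continuous fun d => F d / Real.cosh d ^ m :=
        hFc.div (by continuity) (fun x => by positivity)
      exact hcont.continuousOn.congr (fun x hx => hρF x hx)
    have hρ0 : ∀ x, d₀ ≤ x → 0 ≤ ρ x := fun x hx => by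
      rw [hρF x hx]; exact div_nonneg (hF0 x hx) (by positivity)
    rw [integrableOn_Ici_iff_integrableOn_Ioi]
    apply MeasureTheory.integrableOn_Ioi_of_intervalIntegral_norm_bounded
      (b := fun i : ℕ => d₀ + i) (l := Filter.atTop)
      (2 ^ m / (m : ℝ) * ∫ s in Ici d₀, ψ s) d₀ ?_ ?_ ?_
    · intro i
      exact ((hρc.mono (Icc_subset_Ici_self)).integrableOn_Icc).mono_set Ioc_subset_Icc_self
    · exact Filter.tendsto_atTop_add_const_left _ d₀ tendsto_natCast_atTop_atTop
    · apply Filter.Eventually.of_forall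
      intro i
      have hle : d₀ ≤ d₀ + (i:ℝ) := le_add_of_nonneg_right (Nat.cast_nonneg i)
      have hnorm : (∫ x in d₀..(d₀ + i), ‖ρ x‖) = ∫ x in d₀..(d₀ + i), ρ x := by
        apply intervalIntegral.integral_congr
        intro x hx
        rw [uIcc_of_le hle] at hx
        exact Real.norm_of_nonneg (hρ0 x hx.1)
      have hρd₀ : ρ d₀ = 0 := by
        rw [hρ d₀, intervalIntegral.integral_same, zero_div]
      have htail : (∫ s in d₀..(d₀ + i), ψ s) ≤ ∫ s in Ici d₀, ψ s := by
        rw [intervalIntegral.integral_of_le hle]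
        apply setIntegral_mono_set hψi
        · filter_upwards [ae_restrict_mem measurableSet_Ici] with x hx
          exact hψ0 x hx
        · exact Filter.Eventually.of_forall (fun x hx => hx.1.le)
      calc (∫ x in d₀..(d₀ + i), ‖ρ x‖) = ∫ x in d₀..(d₀ + i), ρ x := hnorm
        _ ≤ 2 ^ m / (m : ℝ) * (ρ d₀ + ∫ s in d₀..(d₀ + i), ψ s) := key1 d₀ _ le_rfl hle
        _ = 2 ^ m / (m : ℝ) * ∫ s in d₀..(d₀ + i), ψ s := by rw [hρd₀, zero_add]
        _ ≤ 2 ^ m / (m : ℝ) * ∫ s in Ici d₀, ψ s := mul_le_mul_of_nonneg_left htail hC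
end

section
/- The pair (W, G) with G(d) = −cosh^{−(n−1)}(d) and W(d) = h − ∫_{d₀}^d (cosh^{2n−2}(t) − 1)^{−1/2} dt solves the system W′(d) = G(d)/√(1 − G(d)²), G′(d) = −(n−1) tanh(d) G(d) on (0, ∞), with G(d₀) = −cosh^{−(n−1)}(d₀) and W(d₀) = h. -/
open Set

/-- The pair `(W, G)` with `G(d) = -cosh^{-(n-1)}(d)` and
`W(d) = h - ∫_{d₀}^d (cosh^{2(n-1)}(t) - 1)^{-1/2} dt` solves the system
`W' = G/√(1-G²)`, `G' = -(n-1) tanh · G` on `(0,∞)` with the stated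
initial values at `d₀`. -/
theorem stmt_6 (n : ℕ) (hn : 2 ≤ n) (d₀ h : ℝ) (hd₀ : 0 < d₀) :
    ∀ G W : ℝ → ℝ,
      (G = fun d => -(Real.cosh d ^ (n - 1))⁻¹) →
      (W = fun d => h - ∫ t in d₀..d,
          (Real.sqrt (Real.cosh t ^ (2 * (n - 1)) - 1))⁻¹) →
      (∀ d ∈ Set.Ioi (0:ℝ),
        HasDerivAt W (G d / Real.sqrt (1 - G d ^ 2)) d ∧
        HasDerivAt G (-(n - 1) * Real.tanh d * G d) d) ∧
      G d₀ = -(Real.cosh d₀ ^ (n - 1))⁻¹ ∧ W d₀ = h := by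
  rintro G W rfl rfl
  set m := n - 1 with hm
  have hm1 : 1 ≤ m := by omega
  set f : ℝ → ℝ := fun t => (Real.sqrt (Real.cosh t ^ (2 * m) - 1))⁻¹ with hf
  have hcosh : ∀ x : ℝ, x ≠ 0 → 1 < Real.cosh x := fun x hx => Real.one_lt_cosh.mpr hx
  have hpos : ∀ x : ℝ, x ≠ 0 → 0 < Real.cosh x ^ (2 * m) - 1 := by
    intro x hx
    have := one_lt_pow₀ (hcosh x hx) (by omega : 2 * m ≠ 0)
    linarith
  have hfc : ContinuousOn f (Set.Ioi (0:ℝ)) := by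
    intro x hx
    have hx0 : x ≠ 0 := ne_of_gt hx
    have : ContinuousAt f x := by
      apply ContinuousAt.inv₀
      · exact (Real.continuous_sqrt.comp (by continuity)).continuousAt
      · exact ne_of_gt (Real.sqrt_pos.mpr (hpos x hx0))
    exact this.continuousWithinAt
  refine ⟨?_, rfl, by simp⟩
  intro d hd
  have hd0 : (0:ℝ) < d := hd
  have hc1 : 1 < Real.cosh d := hcosh d (ne_of_gt hd0)
  have hc0 : (0:ℝ) < Real.cosh d := by linarith
  constructor
  · -- W derivative
    have hsub : Set.uIcc d₀ d ⊆ Set.Ioi (0:ℝ) := by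
      intro x hx
      have := hx.1
      simp only [Set.mem_Ioi]
      rcases le_total d₀ d with h' | h'
      · have : min d₀ d = d₀ := min_eq_left h'
        exact lt_of_lt_of_le hd₀ (by rw [← this]; exact hx.1)
      · have : min d₀ d = d := min_eq_right h'
        exact lt_of_lt_of_le hd0 (by rw [← this]; exact hx.1)
    have hint : IntervalIntegrable f MeasureTheory.volume d₀ d :=
      (hfc.mono hsub).intervalIntegrable
    have hmeas : StronglyMeasurableAtFilter f (nhds d) :=
      hfc.stronglyMeasurableAtFilter isOpen_Ioi _ hd
    have hca : ContinuousAt f d := (hfc.continuousAt (isOpen_Ioi.mem_nhds hd))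
    have hW : HasDerivAt (fun x => h - ∫ t in d₀..x, f t) (0 - f d) d :=
      (hasDerivAt_const d h).sub
        (intervalIntegral.integral_hasDerivAt_right hint hmeas hca)
    convert hW using 1
    -- show G d / sqrt(1 - G d ^2) = 0 - f d
    have hcm : (0:ℝ) < Real.cosh d ^ m := pow_pos hc0 m
    have hsq : Real.cosh d ^ (2 * m) = (Real.cosh d ^ m) ^ 2 := by
      rw [← pow_mul, mul_comm]
    have h1 : 1 - (-(Real.cosh d ^ m)⁻¹) ^ 2
        = (Real.cosh d ^ (2 * m) - 1) / Real.cosh d ^ (2 * m) := by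
      rw [hsq]; field_simp
    have h2 : Real.sqrt ((Real.cosh d ^ (2 * m) - 1) / Real.cosh d ^ (2 * m))
        = Real.sqrt (Real.cosh d ^ (2 * m) - 1) / Real.cosh d ^ m := by
      rw [Real.sqrt_div (hpos d (ne_of_gt hd0)).le, hsq, Real.sqrt_sq hcm.le]
    have hs0 : (0:ℝ) < Real.sqrt (Real.cosh d ^ (2 * m) - 1) :=
      Real.sqrt_pos.mpr (hpos d (ne_of_gt hd0))
    show -(Real.cosh d ^ m)⁻¹ / Real.sqrt (1 - (-(Real.cosh d ^ m)⁻¹) ^ 2) = 0 - f d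
    rw [h1, h2, hf]
    field_simp
    ring
  · -- G derivative
    have hcm0 : Real.cosh d ^ m ≠ 0 := ne_of_gt (pow_pos hc0 m)
    have hder : HasDerivAt (fun x => -(Real.cosh x ^ m)⁻¹)
        (-(-(↑m * Real.cosh d ^ (m - 1) * Real.sinh d) / (Real.cosh d ^ m) ^ 2)) d := by
      exact (((Real.hasDerivAt_cosh d).pow m).inv hcm0).neg
    convert hder using 1
    have ht : Real.tanh d = Real.sinh d / Real.cosh d := Real.tanh_eq_sinh_div_cosh d
    have hmm : Real.cosh d ^ (m - 1) * Real.cosh d = Real.cosh d ^ m := by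
      rw [← pow_succ]; congr 1; omega
    have hcast : ((n:ℝ) - 1) = (m : ℝ) := by
      rw [hm]; push_cast [Nat.cast_sub (by omega : 1 ≤ n)]; ring
    rw [ht, ← hcast]
    field_simp
    ring_nf
    have h2 : Real.cosh d * Real.cosh d ^ (m - 1) = Real.cosh d ^ m := by
      rw [mul_comm]; exact hmm
    have key : Real.cosh d ^ (m * 2) = Real.cosh d * Real.cosh d ^ m * Real.cosh d ^ (m - 1) := by
      calc Real.cosh d ^ (m * 2) = Real.cosh d ^ m * Real.cosh d ^ m := by
            rw [← pow_add]; congr 1; omega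
        _ = _ := by rw [← h2]; ring
    linear_combination (-((n : ℝ) - 1)) * h2
end

section
/- Let a : [d₀,∞) → ℝ solve a′(d) = −ψ(d) − (n−1) tanh(d) a(d) with a(d₀) = γ ≤ −1/2, where ψ : [d₀,∞) → [0,∞) is C¹, decreasing, and (n−1)/2 · tanh(d₀) − ψ(d₀) > 0. Then a′(d) ≥ 0 for all d ≥ d₀, i.e. a is nondecreasing on [d₀, ∞). -/
open Set
set_option maxHeartbeats 1000000

lemma my_hasDerivAt_tanh (x : ℝ) : HasDerivAt Real.tanh (1 - Real.tanh x ^ 2) x := by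
  have hc := Real.cosh_pos x
  have h1 := (Real.hasDerivAt_sinh x).div (Real.hasDerivAt_cosh x) hc.ne'
  have h2 : (Real.cosh x * Real.cosh x - Real.sinh x * Real.sinh x) / Real.cosh x ^ 2
      = 1 - Real.tanh x ^ 2 := by
    rw [Real.tanh_eq_sinh_div_cosh, div_pow]
    field_simp
  rw [h2] at h1
  exact h1.congr_of_eventuallyEq (Filter.Eventually.of_forall fun y =>
    Real.tanh_eq_sinh_div_cosh y)

lemma my_continuous_tanh : Continuous Real.tanh := by
  have h : Real.tanh = fun x => Real.sinh x / Real.cosh x :=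
    funext Real.tanh_eq_sinh_div_cosh
  rw [h]
  exact Real.continuous_sinh.div Real.continuous_cosh fun x => (Real.cosh_pos x).ne'

lemma my_tanh_pos {x : ℝ} (hx : 0 < x) : 0 < Real.tanh x := by
  rw [Real.tanh_eq_sinh_div_cosh]
  exact div_pos (Real.sinh_pos_iff.mpr hx) (Real.cosh_pos x)

lemma my_tanh_sq_lt_one (x : ℝ) : Real.tanh x ^ 2 < 1 := by
  rw [Real.tanh_eq_sinh_div_cosh, div_pow, div_lt_one (by positivity)]
  nlinarith [Real.cosh_sq x]

lemma my_deriv_nonpos {ψ : ℝ → ℝ} {d₀ x m : ℝ} (hψa : AntitoneOn ψ (Set.Ici d₀))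
    (hx : d₀ ≤ x) (hm : HasDerivAt ψ m x) : m ≤ 0 := by
  have h := hasDerivAt_iff_tendsto_slope.mp hm
  have h2 : Filter.Tendsto (slope ψ x) (nhdsWithin x (Set.Ioi x)) (nhds m) :=
    h.mono_left (nhdsWithin_mono x fun y hy => ne_of_gt hy)
  refine le_of_tendsto h2 ?_
  filter_upwards [self_mem_nhdsWithin] with y hy
  have hy' : x < y := hy
  rw [slope_def_field]
  have h3 : ψ y ≤ ψ x := hψa hx (hx.trans hy'.le) hy'.le
  apply div_nonpos_of_nonpos_of_nonneg <;> linarith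

/-- Let `a` solve `a' = -ψ - (n-1) tanh · a` on `[d₀,∞)` with `a(d₀) = γ ≤ -1/2`,
where `ψ ≥ 0` is `C¹` and nonincreasing on `[d₀,∞)` and
`(n-1)/2 · tanh(d₀) - ψ(d₀) > 0`. Then `a' ≥ 0` on `[d₀,∞)`, i.e. `a` is
nondecreasing there. -/
theorem stmt_15 (n : ℕ) (hn : 2 ≤ n) (d₀ γ : ℝ) (hd₀ : 0 < d₀)
    (hγ : γ ≤ -(1/2))
    (ψ a : ℝ → ℝ)
    (hψC1 : ContDiffOn ℝ 1 ψ (Set.Ici d₀))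
    (hψ0 : ∀ d ∈ Set.Ici d₀, 0 ≤ ψ d)
    (hψa : AntitoneOn ψ (Set.Ici d₀))
    (hpos : (n - 1) / 2 * Real.tanh d₀ - ψ d₀ > 0)
    (ha' : ∀ d ∈ Set.Ici d₀,
      HasDerivAt a (-ψ d - (n - 1) * Real.tanh d * a d) d)
    (ha0 : a d₀ = γ) :
    (∀ d ∈ Set.Ici d₀, 0 ≤ -ψ d - (n - 1) * Real.tanh d * a d) ∧
      MonotoneOn a (Set.Ici d₀) := by
  have hn1 : (1:ℝ) ≤ (n:ℝ) - 1 := by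
    have : (2:ℝ) ≤ (n:ℝ) := by exact_mod_cast hn
    linarith
  set k : ℕ := n - 1 with hkdef
  have hk1 : 1 ≤ k := by omega
  have hk : (k:ℝ) = (n:ℝ) - 1 := by
    rw [hkdef]
    push_cast [Nat.cast_sub (by omega : 1 ≤ n)]
    ring
  set f : ℝ → ℝ := fun d => -ψ d - ((n:ℝ) - 1) * Real.tanh d * a d with hfdef
  -- continuity
  have hψcont : ContinuousOn ψ (Set.Ici d₀) := hψC1.continuousOn
  have hacont : ContinuousOn a (Set.Ici d₀) := fun x hx =>
    (ha' x hx).continuousAt.continuousWithinAt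
  have hfcont : ContinuousOn f (Set.Ici d₀) := by
    apply hψcont.neg.sub
    exact (continuousOn_const.mul my_continuous_tanh.continuousOn).mul hacont
  -- initial positivity
  have htd₀ : 0 < Real.tanh d₀ := my_tanh_pos hd₀
  have hf0 : 0 < f d₀ := by
    have h3 : ((n:ℝ) - 1) * Real.tanh d₀ * γ ≤ ((n:ℝ) - 1) * Real.tanh d₀ * (-(1/2)) :=
      mul_le_mul_of_nonneg_left hγ (by positivity)
    simp only [hfdef, ha0]
    nlinarith
  -- key claim
  have hkey : ∀ d ∈ Set.Ici d₀, 0 ≤ f d := by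
    intro d₁ hd₁
    by_contra hneg
    push_neg at hneg
    set T : Set ℝ := {x ∈ Set.Icc d₀ d₁ | f x ≤ 0} with hTdef
    have hTne : d₁ ∈ T := ⟨⟨hd₁, le_refl d₁⟩, hneg.le⟩
    have hTBdd : BddBelow T := ⟨d₀, fun x hx => hx.1.1⟩
    have hTclosed : IsClosed T := by
      have : T = Set.Icc d₀ d₁ ∩ f ⁻¹' (Set.Iic 0) := by
        ext x; simp [hTdef, Set.mem_setOf_eq, and_comm]
      rw [this]
      exact (hfcont.mono (Set.Icc_subset_Ici_self)).preimage_isClosed_of_isClosed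
        isClosed_Icc isClosed_Iic
    set c : ℝ := sInf T with hcdef
    have hcmem : c ∈ T := hTclosed.csInf_mem ⟨d₁, hTne⟩ hTBdd
    obtain ⟨⟨hc0, hc1⟩, hfc⟩ := hcmem
    have hlt : ∀ x ∈ Set.Ico d₀ c, 0 < f x := by
      intro x hx
      by_contra h
      push_neg at h
      have : c ≤ x := csInf_le hTBdd ⟨⟨hx.1, hx.2.le.trans hc1⟩, h⟩
      exact absurd hx.2 (not_lt.mpr this)
    have hd₀c : d₀ < c := by
      rcases lt_or_eq_of_le hc0 with h | h
      · exact h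
      · exact absurd hfc (not_le.mpr (h ▸ hf0))
    -- f c = 0
    have hfc0 : f c = 0 := by
      refine le_antisymm hfc ?_
      have hne : (nhdsWithin c (Set.Ico d₀ c)).NeBot := by
        rw [← mem_closure_iff_nhdsWithin_neBot, closure_Ico hd₀c.ne]
        exact ⟨hc0, le_refl c⟩
      have hcw : ContinuousWithinAt f (Set.Ico d₀ c) c :=
        (hfcont c hc0).mono (fun x hx => hx.1)
      haveI := hne
      exact ge_of_tendsto hcw
        (Filter.eventually_of_mem self_mem_nhdsWithin fun x hx => (hlt x hx).le)
    -- a monotone on Icc d₀ c, so a ≤ a c ≤ 0 there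
    have hamono : MonotoneOn a (Set.Icc d₀ c) := by
      apply monotoneOn_of_deriv_nonneg (convex_Icc d₀ c)
        (hacont.mono (Set.Icc_subset_Ici_self))
      · intro x hx
        rw [interior_Icc] at hx
        exact ((ha' x (le_of_lt hx.1)).differentiableAt).differentiableWithinAt
      · intro x hx
        rw [interior_Icc] at hx
        rw [(ha' x hx.1.le).deriv]
        exact (hlt x ⟨hx.1.le, hx.2⟩).le
    have hcpos : 0 < c := lt_of_lt_of_le hd₀ hc0
    have htc : 0 < Real.tanh c := my_tanh_pos hcpos
    have hac0 : a c ≤ 0 := by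
      have h5 : ((n:ℝ) - 1) * Real.tanh c * a c ≤ 0 := by
        have := hψ0 c hc0
        simp only [hfdef] at hfc0
        linarith
      by_contra h
      push_neg at h
      nlinarith [mul_pos (mul_pos (show (0:ℝ) < (n:ℝ) - 1 by linarith) htc) h]
    have ha_nonpos : ∀ x ∈ Set.Icc d₀ c, a x ≤ 0 := fun x hx =>
      (hamono hx ⟨hc0, le_refl c⟩ hx.2).trans hac0
    -- u = (ψ + (n-1) tanh · a) · cosh ^ k antitone on [d₀, c]
    set u : ℝ → ℝ := fun x => (ψ x + ((n:ℝ) - 1) * Real.tanh x * a x) * Real.cosh x ^ k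
      with hudef
    have hu_deriv : ∀ x ∈ Set.Ioo d₀ c,
        HasDerivAt u ((deriv ψ x + ((n:ℝ) - 1) * ((1 - Real.tanh x ^ 2) * a x
            + Real.tanh x * f x)) * Real.cosh x ^ k
          + (ψ x + ((n:ℝ) - 1) * Real.tanh x * a x)
            * ((k:ℝ) * Real.cosh x ^ (k - 1) * Real.sinh x)) x := by
      intro x hx
      have hxI : x ∈ Set.Ici d₀ := hx.1.le
      have hψd : DifferentiableAt ℝ ψ x :=
        ((hψC1.differentiableOn one_ne_zero) x hxI).differentiableAt
          (Ici_mem_nhds hx.1)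
      have hm : HasDerivAt ψ (deriv ψ x) x := hψd.hasDerivAt
      have hta : HasDerivAt (fun y => Real.tanh y * a y)
          ((1 - Real.tanh x ^ 2) * a x + Real.tanh x * f x) x :=
        (my_hasDerivAt_tanh x).mul (ha' x hxI)
      have hh : HasDerivAt (fun y => ψ y + ((n:ℝ) - 1) * (Real.tanh y * a y))
          (deriv ψ x + ((n:ℝ) - 1) * ((1 - Real.tanh x ^ 2) * a x
            + Real.tanh x * f x)) x := hm.add (hta.const_mul _)
      have hg : HasDerivAt (fun y => Real.cosh y ^ k)
          ((k:ℝ) * Real.cosh x ^ (k - 1) * Real.sinh x) x := by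
        simpa [mul_comm, mul_assoc] using (Real.hasDerivAt_cosh x).fun_pow k
      have := hh.fun_mul hg
      simp only [hudef]
      have e : (fun x => (ψ x + ((n:ℝ) - 1) * Real.tanh x * a x) * Real.cosh x ^ k)
          = (fun y => (ψ y + ((n:ℝ) - 1) * (Real.tanh y * a y)) * Real.cosh y ^ k) := by
        funext y; ring
      rw [e]
      exact this.congr_deriv (by ring)
    have hu_anti : AntitoneOn u (Set.Icc d₀ c) := by
      apply antitoneOn_of_deriv_nonpos (convex_Icc d₀ c)
      · apply ContinuousOn.mul
        · exact (hψcont.mono Set.Icc_subset_Ici_self).add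
            (((continuousOn_const.mul my_continuous_tanh.continuousOn).mul
              hacont).mono Set.Icc_subset_Ici_self)
        · exact (Real.continuous_cosh.pow k).continuousOn
      · intro x hx
        rw [interior_Icc] at hx
        exact (hu_deriv x hx).differentiableAt.differentiableWithinAt
      · intro x hx
        rw [interior_Icc] at hx
        rw [(hu_deriv x hx).deriv]
        have hxI : x ∈ Set.Ici d₀ := hx.1.le
        have hm : HasDerivAt ψ (deriv ψ x) x :=
          (((hψC1.differentiableOn one_ne_zero) x hxI).differentiableAt
            (Ici_mem_nhds hx.1)).hasDerivAt
        have hψ' : deriv ψ x ≤ 0 := my_deriv_nonpos hψa hxI hm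
        have hax : a x ≤ 0 := ha_nonpos x ⟨hx.1.le, hx.2.le⟩
        have htsq : Real.tanh x ^ 2 < 1 := my_tanh_sq_lt_one x
        have hC : (0:ℝ) < Real.cosh x := Real.cosh_pos x
        -- rewrite: the expression equals (ψ' + (n-1)(1-tanh²)a) * cosh^k
        have hcoshk : Real.cosh x ^ k = Real.cosh x * Real.cosh x ^ (k - 1) := by
          rw [← pow_succ']
          congr 1
          omega
        have htanhcosh : Real.tanh x * Real.cosh x ^ k
            = Real.sinh x * Real.cosh x ^ (k - 1) := by
          rw [Real.tanh_eq_sinh_div_cosh, hcoshk]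
          field_simp
        have hfx : f x = -ψ x - ((n:ℝ) - 1) * Real.tanh x * a x := rfl
        have heq : (deriv ψ x + ((n:ℝ) - 1) * ((1 - Real.tanh x ^ 2) * a x
              + Real.tanh x * f x)) * Real.cosh x ^ k
            + (ψ x + ((n:ℝ) - 1) * Real.tanh x * a x)
              * ((k:ℝ) * Real.cosh x ^ (k - 1) * Real.sinh x)
            = (deriv ψ x + ((n:ℝ) - 1) * (1 - Real.tanh x ^ 2) * a x)
              * Real.cosh x ^ k := by
          rw [hfx, hk]
          linear_combination (((n:ℝ) - 1) * (-ψ x - ((n:ℝ) - 1) * Real.tanh x * a x))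
            * htanhcosh
        rw [heq]
        have hCk : (0:ℝ) < Real.cosh x ^ k := by positivity
        have h1 : ((n:ℝ) - 1) * (1 - Real.tanh x ^ 2) * a x ≤ 0 :=
          mul_nonpos_of_nonneg_of_nonpos
            (mul_nonneg (by linarith) (by linarith)) hax
        exact mul_nonpos_of_nonpos_of_nonneg (by linarith) hCk.le
    -- contradiction
    have huc : u c = 0 := by
      have : ψ c + ((n:ℝ) - 1) * Real.tanh c * a c = 0 := by
        simp only [hfdef] at hfc0; linarith
      simp [hudef, this]
    have hud₀ : u d₀ < 0 := by
      have h3 : ((n:ℝ) - 1) * Real.tanh d₀ * γ ≤ ((n:ℝ) - 1) * Real.tanh d₀ * (-(1/2)) :=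
        mul_le_mul_of_nonneg_left hγ (by positivity)
      have hneg' : ψ d₀ + ((n:ℝ) - 1) * Real.tanh d₀ * a d₀ < 0 := by
        rw [ha0]; nlinarith
      have hCk : (0:ℝ) < Real.cosh d₀ ^ k := by positivity
      exact mul_neg_of_neg_of_pos hneg' hCk
    have := hu_anti ⟨le_refl d₀, hc0⟩ ⟨hc0, le_refl c⟩ hc0
    rw [huc] at this
    linarith
  refine ⟨hkey, ?_⟩
  apply monotoneOn_of_deriv_nonneg (convex_Ici d₀) hacont
  · intro x hx
    rw [interior_Ici] at hx
    exact ((ha' x (show d₀ ≤ x from le_of_lt hx)).differentiableAt).differentiableWithinAt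
  · intro x hx
    rw [interior_Ici] at hx
    rw [(ha' x (show d₀ ≤ x from hx.le)).deriv]
    exact hkey x (show d₀ ≤ x from hx.le)
end

section
/- Comparison of the full ODE system: suppose (w₁,g₁) and (w₂,g₂) both solve w′ = g/√(1−g²), g′ = −(n−1) tanh(d) g − ψ(d, w) on an interval (0, d₀], with ψ(d, ·) nonincreasing in the second variable, and both satisfy g(0⁺) = −1. If g₁(d₀) > g₂(d₀) and w₁(d₀) = w₂(d₀) = h, then a contradiction arises; i.e., the value γ = g(d₀) of such a solution with g(0⁺) = −1 is unique. -/
open Filter Topology Set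

private lemma mono_f_nonneg {x y : ℝ} (hx : x ∈ Set.Ioo (-1:ℝ) 1) (hy : y ∈ Set.Ioo (-1:ℝ) 1)
    (hx0 : 0 ≤ x) (hxy : x < y) :
    x / Real.sqrt (1 - x ^ 2) < y / Real.sqrt (1 - y ^ 2) := by
  obtain ⟨hx1, hx2⟩ := hx
  obtain ⟨hy1, hy2⟩ := hy
  have h1x : (0:ℝ) < 1 - x ^ 2 := by nlinarith
  have h1y : (0:ℝ) < 1 - y ^ 2 := by nlinarith
  have sx : 0 < Real.sqrt (1 - x ^ 2) := Real.sqrt_pos.mpr h1x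
  have sy : 0 < Real.sqrt (1 - y ^ 2) := Real.sqrt_pos.mpr h1y
  have hsx2 : Real.sqrt (1 - x ^ 2) ^ 2 = 1 - x ^ 2 := Real.sq_sqrt h1x.le
  have hsy2 : Real.sqrt (1 - y ^ 2) ^ 2 = 1 - y ^ 2 := Real.sq_sqrt h1y.le
  rw [div_lt_div_iff₀ sx sy]
  have hy0 : 0 < y := lt_of_le_of_lt hx0 hxy
  have hB : 0 < y * Real.sqrt (1 - x ^ 2) := mul_pos hy0 sx
  have hsq : (x * Real.sqrt (1 - y ^ 2)) ^ 2 < (y * Real.sqrt (1 - x ^ 2)) ^ 2 := by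
    have : x ^ 2 < y ^ 2 := by nlinarith
    nlinarith
  exact lt_of_pow_lt_pow_left₀ 2 hB.le hsq

private lemma mono_f {x y : ℝ} (hx : x ∈ Set.Ioo (-1:ℝ) 1) (hy : y ∈ Set.Ioo (-1:ℝ) 1)
    (hxy : x < y) :
    x / Real.sqrt (1 - x ^ 2) < y / Real.sqrt (1 - y ^ 2) := by
  have h1x : (0:ℝ) < 1 - x ^ 2 := by obtain ⟨a, b⟩ := hx; nlinarith
  have h1y : (0:ℝ) < 1 - y ^ 2 := by obtain ⟨a, b⟩ := hy; nlinarith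
  rcases le_or_gt 0 x with hx0 | hx0
  · exact mono_f_nonneg hx hy hx0 hxy
  rcases le_or_gt y 0 with hy0 | hy0
  · have h := mono_f_nonneg (x := -y) (y := -x)
      ⟨by linarith [hy.2], by linarith [hy.1]⟩ ⟨by linarith [hx.2], by linarith [hx.1]⟩
      (by linarith) (by linarith)
    simp only [neg_sq, neg_div, neg_lt_neg_iff] at h
    exact h
  · calc x / Real.sqrt (1 - x ^ 2) < 0 :=
        div_neg_of_neg_of_pos hx0 (Real.sqrt_pos.mpr h1x)
      _ < y / Real.sqrt (1 - y ^ 2) := div_pos hy0 (Real.sqrt_pos.mpr h1y)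

private lemma aux_le (n : ℕ) (hn : 2 ≤ n) (d₀ : ℝ) (hd₀ : 0 < d₀)
    (ψ : ℝ → ℝ → ℝ)
    (hψmono : ∀ d, Antitone (ψ d))
    (w₁ g₁ w₂ g₂ : ℝ → ℝ)
    (hg₁ : ∀ d ∈ Set.Ioi (0:ℝ), g₁ d ∈ Set.Ioo (-1 : ℝ) 1)
    (hg₂ : ∀ d ∈ Set.Ioi (0:ℝ), g₂ d ∈ Set.Ioo (-1 : ℝ) 1)
    (hw₁' : ∀ d ∈ Set.Ioi (0:ℝ),
      HasDerivAt w₁ (g₁ d / Real.sqrt (1 - g₁ d ^ 2)) d)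
    (hw₂' : ∀ d ∈ Set.Ioi (0:ℝ),
      HasDerivAt w₂ (g₂ d / Real.sqrt (1 - g₂ d ^ 2)) d)
    (hg₁' : ∀ d ∈ Set.Ioi (0:ℝ),
      HasDerivAt g₁ (-(n - 1) * Real.tanh d * g₁ d - ψ d (w₁ d)) d)
    (hg₂' : ∀ d ∈ Set.Ioi (0:ℝ),
      HasDerivAt g₂ (-(n - 1) * Real.tanh d * g₂ d - ψ d (w₂ d)) d)
    (hw0 : w₁ d₀ = w₂ d₀)
    (hg₁lim : Tendsto g₁ (nhdsWithin 0 (Set.Ioi 0)) (nhds (-1)))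
    (hg₂lim : Tendsto g₂ (nhdsWithin 0 (Set.Ioi 0)) (nhds (-1))) :
    g₁ d₀ ≤ g₂ d₀ := by
  by_contra hlt
  push_neg at hlt
  set ε : ℝ := g₁ d₀ - g₂ d₀ with hε_def
  have hε : 0 < ε := by simp only [hε_def]; linarith
  -- find a point d₁ near 0 where g₁ - g₂ < ε/2
  have hU0 : Tendsto (fun d => g₁ d - g₂ d) (nhdsWithin 0 (Set.Ioi 0)) (nhds 0) := by
    have := hg₁lim.sub hg₂lim
    norm_num at this
    exact this
  have hev1 : ∀ᶠ d in nhdsWithin (0:ℝ) (Set.Ioi 0), g₁ d - g₂ d < ε/2 :=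
    hU0.eventually_lt_const (by linarith)
  have hev2 : ∀ᶠ d in nhdsWithin (0:ℝ) (Set.Ioi 0), d < d₀ :=
    eventually_nhdsWithin_of_eventually_nhds (eventually_lt_nhds hd₀)
  have hev3 : ∀ᶠ d in nhdsWithin (0:ℝ) (Set.Ioi 0), (0:ℝ) < d :=
    eventually_mem_nhdsWithin
  obtain ⟨d₁, hu1, hd₁d₀, hd₁0⟩ := (hev1.and (hev2.and hev3)).exists
  -- the set where g₁ - g₂ ≤ ε/2
  set A : Set ℝ := {d | d ∈ Set.Icc d₁ d₀ ∧ g₁ d - g₂ d ≤ ε/2} with hA_def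
  have hIccsub : Set.Icc d₁ d₀ ⊆ Set.Ioi (0:ℝ) := fun x hx => lt_of_lt_of_le hd₁0 hx.1
  have hcontU : ContinuousOn (fun d => g₁ d - g₂ d) (Set.Icc d₁ d₀) := fun x hx =>
    (((hg₁' x (hIccsub hx)).continuousAt).sub ((hg₂' x (hIccsub hx)).continuousAt)).continuousWithinAt
  have hAclosed : IsClosed A := by
    have : A = Set.Icc d₁ d₀ ∩ (fun d => g₁ d - g₂ d) ⁻¹' Set.Iic (ε/2) := by
      ext x; simp [hA_def, Set.mem_Icc, and_assoc]
    rw [this]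
    exact hcontU.preimage_isClosed_of_isClosed isClosed_Icc isClosed_Iic
  have hAsub : A ⊆ Set.Icc d₁ d₀ := fun x hx => hx.1
  have hAcompact : IsCompact A := isCompact_Icc.of_isClosed_subset hAclosed hAsub
  have hAne : A.Nonempty := ⟨d₁, ⟨le_refl _, le_of_lt hd₁d₀⟩, le_of_lt hu1⟩
  set a : ℝ := sSup A with ha_def
  have haA : a ∈ A := hAcompact.sSup_mem hAne
  have haIcc : a ∈ Set.Icc d₁ d₀ := hAsub haA
  have ha0 : 0 < a := hIccsub haIcc
  have haε : g₁ a - g₂ a ≤ ε/2 := haA.2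
  have had₀ : a < d₀ := by
    rcases lt_or_eq_of_le haIcc.2 with h | h
    · exact h
    · exfalso; rw [h] at haε; simp only [hε_def] at haε hε; linarith
  -- On (a, d₀], g₁ - g₂ > ε/2
  have hkey : ∀ d ∈ Set.Ioc a d₀, ε/2 < g₁ d - g₂ d := by
    intro d hd
    by_contra hc
    push_neg at hc
    have : d ∈ A := ⟨⟨le_trans haIcc.1 hd.1.le, hd.2⟩, hc⟩
    have : d ≤ a := le_csSup hAcompact.bddAbove this
    exact absurd hd.1 (not_lt.mpr this)
  have hIoosub : Set.Ioo a d₀ ⊆ Set.Ioi (0:ℝ) := fun x hx => lt_trans ha0 hx.1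
  have hIccsub2 : Set.Icc a d₀ ⊆ Set.Ioi (0:ℝ) := fun x hx => lt_of_lt_of_le ha0 hx.1
  -- W = w₁ - w₂ is strictly monotone on [a, d₀]
  have hWmono : StrictMonoOn (fun d => w₁ d - w₂ d) (Set.Icc a d₀) := by
    apply strictMonoOn_of_deriv_pos (convex_Icc a d₀)
    · exact fun x hx =>
        (((hw₁' x (hIccsub2 hx)).continuousAt).sub
          ((hw₂' x (hIccsub2 hx)).continuousAt)).continuousWithinAt
    · intro x hx
      rw [interior_Icc] at hx
      have hW : HasDerivAt (fun d => w₁ d - w₂ d)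
          (g₁ x / Real.sqrt (1 - g₁ x ^ 2) - g₂ x / Real.sqrt (1 - g₂ x ^ 2)) x :=
        (hw₁' x (hIoosub hx)).sub (hw₂' x (hIoosub hx))
      rw [hW.deriv]
      have hlt : g₂ x < g₁ x := by
        have := hkey x ⟨hx.1, hx.2.le⟩; linarith
      have := mono_f (hg₂ x (hIoosub hx)) (hg₁ x (hIoosub hx)) hlt
      linarith
  -- hence w₁ < w₂ on (a, d₀)
  have hWneg : ∀ x ∈ Set.Ioo a d₀, w₁ x ≤ w₂ x := by
    intro x hx
    have := hWmono ⟨hx.1.le, hx.2.le⟩ (Set.right_mem_Icc.mpr (le_of_lt had₀)) hx.2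
    simp only at this
    rw [hw0] at this
    linarith
  -- U = g₁ - g₂ is strictly antitone on [a, d₀]
  have hUanti : StrictAntiOn (fun d => g₁ d - g₂ d) (Set.Icc a d₀) := by
    apply strictAntiOn_of_deriv_neg (convex_Icc a d₀)
    · exact hcontU.mono (Set.Icc_subset_Icc haIcc.1 le_rfl)
    · intro x hx
      rw [interior_Icc] at hx
      have hU : HasDerivAt (fun d => g₁ d - g₂ d)
          ((-(n - 1) * Real.tanh x * g₁ x - ψ x (w₁ x)) -
           (-(n - 1) * Real.tanh x * g₂ x - ψ x (w₂ x))) x :=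
        (hg₁' x (hIoosub hx)).sub (hg₂' x (hIoosub hx))
      rw [hU.deriv]
      have htanh : 0 < Real.tanh x := by
        rw [Real.tanh_eq_sinh_div_cosh]
        exact div_pos (Real.sinh_pos_iff.mpr (hIoosub hx)) (Real.cosh_pos x)
      have hn' : (1:ℝ) ≤ (n:ℝ) - 1 := by
        have : (2:ℝ) ≤ (n:ℝ) := by exact_mod_cast hn
        linarith
      have hux : ε/2 < g₁ x - g₂ x := hkey x ⟨hx.1, hx.2.le⟩
      have hψle : ψ x (w₂ x) ≤ ψ x (w₁ x) := hψmono x (hWneg x hx)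
      nlinarith [mul_pos htanh (lt_trans (by linarith : (0:ℝ) < ε/2) hux)]
  -- contradiction: g₁ a - g₂ a > ε but ≤ ε/2
  have := hUanti (Set.left_mem_Icc.mpr had₀.le) (Set.right_mem_Icc.mpr had₀.le) had₀
  simp only at this
  have : ε < g₁ a - g₂ a := by simp only [hε_def] at this ⊢; linarith
  linarith

/-- Uniqueness of the initial slope: if `(w₁,g₁)` and `(w₂,g₂)` both solve
`w' = g/√(1-g²)`, `g' = -(n-1) tanh · g - ψ(·, w)` on `(0,∞)`, with
`ψ ≥ 0` continuous and nonincreasing in the second variable, both satisfy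
`w(d₀) = h` and `g(0⁺) = -1`, then `g₁(d₀) = g₂(d₀)`. -/
theorem stmt_16 (n : ℕ) (hn : 2 ≤ n) (d₀ h : ℝ) (hd₀ : 0 < d₀)
    (ψ : ℝ → ℝ → ℝ)
    (hψc : Continuous fun p : ℝ × ℝ => ψ p.1 p.2)
    (hψ0 : ∀ d t, 0 ≤ ψ d t)
    (hψmono : ∀ d, Antitone (ψ d))
    (w₁ g₁ w₂ g₂ : ℝ → ℝ)
    (hg₁ : ∀ d ∈ Set.Ioi (0:ℝ), g₁ d ∈ Set.Ioo (-1 : ℝ) 1)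
    (hg₂ : ∀ d ∈ Set.Ioi (0:ℝ), g₂ d ∈ Set.Ioo (-1 : ℝ) 1)
    (hw₁' : ∀ d ∈ Set.Ioi (0:ℝ),
      HasDerivAt w₁ (g₁ d / Real.sqrt (1 - g₁ d ^ 2)) d)
    (hw₂' : ∀ d ∈ Set.Ioi (0:ℝ),
      HasDerivAt w₂ (g₂ d / Real.sqrt (1 - g₂ d ^ 2)) d)
    (hg₁' : ∀ d ∈ Set.Ioi (0:ℝ),
      HasDerivAt g₁ (-(n - 1) * Real.tanh d * g₁ d - ψ d (w₁ d)) d)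
    (hg₂' : ∀ d ∈ Set.Ioi (0:ℝ),
      HasDerivAt g₂ (-(n - 1) * Real.tanh d * g₂ d - ψ d (w₂ d)) d)
    (hw₁0 : w₁ d₀ = h) (hw₂0 : w₂ d₀ = h)
    (hg₁lim : Tendsto g₁ (nhdsWithin 0 (Set.Ioi 0)) (nhds (-1)))
    (hg₂lim : Tendsto g₂ (nhdsWithin 0 (Set.Ioi 0)) (nhds (-1))) :
    g₁ d₀ = g₂ d₀ :=
  le_antisymm
    (aux_le n hn d₀ hd₀ ψ hψmono w₁ g₁ w₂ g₂ hg₁ hg₂ hw₁' hw₂' hg₁' hg₂'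
      (hw₁0.trans hw₂0.symm) hg₁lim hg₂lim)
    (aux_le n hn d₀ hd₀ ψ hψmono w₂ g₂ w₁ g₁ hg₂ hg₁ hw₂' hw₁' hg₂' hg₁'
      (hw₂0.trans hw₁0.symm) hg₂lim hg₁lim)
end
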